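/- Let μ and ν be Borel probability measures on ℝ concentrated on (0, ∞), with cumulative distribution functions B(t) = μ((-∞, t]) and D(t) = ν((-∞, t]) respectively. Suppose D(t) ≤ B(t) for all t > 0 (i.e., ν first-order stochastically dominates μ), that there exists t₀ > 0 with D(t₀) < B(t₀), and that ∫ (1/t) dμ(t) < ∞. Then ∫ (1/t) dν(t) < ∫ (1/t) dμ(t); that is, the expected reciprocal under the stochastically dominant distribution is strictly smaller. -/

import Mathlib

open MeasureTheory Set Filter Topology

lemma iic_zero_null (ρ : Measure ℝ) [IsProbabilityMeasure ρ]
    (hρ : ρ (Set.Ioi (0 : ℝ)) = 1) : ρ (Set.Iic (0 : ℝ)) = 0 := by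
  have h := measure_compl (μ := ρ) (s := Set.Ioi (0:ℝ)) measurableSet_Ioi (measure_ne_top ρ _)
  rw [Set.compl_Ioi] at h
  simp [h, hρ]

lemma meas_lt_set (s : ℝ) (hs : 0 < s) :
    {a : ℝ | s < 1 / a} = Set.Ioo 0 (1 / s) := by
  ext a
  simp only [Set.mem_setOf_eq, Set.mem_Ioo]
  constructor
  · intro h
    have ha : 0 < a := by
      by_contra hc
      push_neg at hc
      have : 1 / a ≤ 0 := div_nonpos_of_nonneg_of_nonpos zero_le_one hc
      linarith
    refine ⟨ha, ?_⟩
    rw [lt_div_iff₀ hs]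
    rw [lt_div_iff₀ ha] at h
    nlinarith
  · rintro ⟨ha, hlt⟩
    rw [lt_div_iff₀ ha]
    rw [lt_div_iff₀ hs] at hlt
    nlinarith

/-- If `ν` (CDF `D`) first-order stochastically dominates `μ` (CDF `B`)
on `(0, ∞)`, i.e. `D t ≤ B t` for all `t > 0` with strict inequality at some `t₀ > 0`,
both measures being concentrated on `(0, ∞)`, and `∫ (1/t) dμ < ∞`, then
`∫ (1/t) dν < ∫ (1/t) dμ`: the expected reciprocal is strictly smaller under the
stochastically dominant distribution. -/
theorem expected_reciprocal_lt_of_fsd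
    (μ ν : Measure ℝ) [IsProbabilityMeasure μ] [IsProbabilityMeasure ν]
    (hμ : μ (Set.Ioi (0 : ℝ)) = 1) (hν : ν (Set.Ioi (0 : ℝ)) = 1)
    (hle : ∀ t > (0 : ℝ), ν (Set.Iic t) ≤ μ (Set.Iic t))
    (hstrict : ∃ t₀ > (0 : ℝ), ν (Set.Iic t₀) < μ (Set.Iic t₀))
    (hfin : ∫⁻ t, ENNReal.ofReal (1 / t) ∂μ < ⊤) :
    ∫⁻ t, ENNReal.ofReal (1 / t) ∂ν < ∫⁻ t, ENNReal.ofReal (1 / t) ∂μ := by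
  have hμ0 : μ (Set.Iic (0:ℝ)) = 0 := iic_zero_null μ hμ
  have hν0 : ν (Set.Iic (0:ℝ)) = 0 := iic_zero_null ν hν
  have hnn : ∀ (ρ : Measure ℝ), ρ (Set.Iic (0:ℝ)) = 0 → 0 ≤ᵐ[ρ] fun t : ℝ => 1 / t := by
    intro ρ h0
    rw [Filter.EventuallyLE, ae_iff]
    refine measure_mono_null (fun a ha => ?_) h0
    simp only [Set.mem_setOf_eq, Pi.zero_apply, not_le] at ha
    simp only [Set.mem_Iic]
    by_contra hc
    push_neg at hc
    exact absurd ha (not_lt.mpr (le_of_lt (div_pos zero_lt_one hc)))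
  have hmble : AEMeasurable (fun t : ℝ => 1 / t) μ :=
    (measurable_const.div measurable_id).aemeasurable
  have hmbleν : AEMeasurable (fun t : ℝ => 1 / t) ν :=
    (measurable_const.div measurable_id).aemeasurable
  rw [lintegral_eq_lintegral_meas_lt μ (hnn μ hμ0) hmble,
      lintegral_eq_lintegral_meas_lt ν (hnn ν hν0) hmbleν] at *
  -- comparison of Ioo measures
  have key : ∀ x : ℝ, 0 < x → ν (Set.Ioo 0 x) ≤ μ (Set.Ioo 0 x) := by
    intro x hx
    have hUnion : Set.Ioo (0:ℝ) x = ⋃ n : ℕ, Set.Ioc 0 (x - 1/(n+1)) := by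
      ext a
      simp only [Set.mem_Ioo, Set.mem_iUnion, Set.mem_Ioc]
      constructor
      · rintro ⟨ha, hax⟩
        obtain ⟨n, hn⟩ := exists_nat_one_div_lt (show (0:ℝ) < x - a by linarith)
        exact ⟨n, ha, by push_cast; linarith⟩
      · rintro ⟨n, ha, hax⟩
        have h1 : (0:ℝ) < 1/((n:ℝ)+1) := by positivity
        exact ⟨ha, by linarith⟩
    have hdir : Directed (· ⊆ ·) (fun n : ℕ => Set.Ioc (0:ℝ) (x - 1/(n+1))) := by
      refine Monotone.directed_le fun m n hmn => Set.Ioc_subset_Ioc_right ?_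
      have h2 : (1:ℝ)/((n:ℝ)+1) ≤ 1/((m:ℝ)+1) :=
        one_div_le_one_div_of_le (by positivity) (by exact_mod_cast by linarith)
      linarith
    have hνeq : ν (Set.Ioo 0 x) = ⨆ n : ℕ, ν (Set.Ioc 0 (x - 1/(n+1))) := by
      rw [hUnion]; exact hdir.measure_iUnion
    rw [hνeq]
    refine iSup_le fun n => ?_
    set y := x - 1/((n:ℝ)+1) with hy
    have h1 : (0:ℝ) < 1/((n:ℝ)+1) := by positivity
    have hyx : y < x := by rw [hy]; linarith
    rcases le_or_gt y 0 with h|h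
    · rw [Set.Ioc_eq_empty (not_lt.mpr h)]; simp
    · calc ν (Set.Ioc 0 y) ≤ ν (Set.Iic y) := measure_mono Set.Ioc_subset_Iic_self
        _ ≤ μ (Set.Iic y) := hle y h
        _ ≤ μ (Set.Iic 0) + μ (Set.Ioc 0 y) := by
            rw [← measure_union (Set.Iic_disjoint_Ioc le_rfl) measurableSet_Ioc]
            exact measure_mono (by rw [Set.Iic_union_Ioc_eq_Iic (le_of_lt h)])
        _ = μ (Set.Ioc 0 y) := by rw [hμ0, zero_add]
        _ ≤ μ (Set.Ioo 0 x) := measure_mono (Set.Ioc_subset_Ioo_right hyx)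
  -- strict region
  obtain ⟨t₀, ht₀, hst⟩ := hstrict
  have htend : Filter.Tendsto (fun n : ℕ => ν (Set.Iic (t₀ + 1/(n+1)))) Filter.atTop
      (𝓝 (ν (Set.Iic t₀))) := by
    have h1 : (⋂ n : ℕ, Set.Iic (t₀ + 1/((n:ℝ)+1))) = Set.Iic t₀ := by
      ext a
      simp only [Set.mem_iInter, Set.mem_Iic]
      constructor
      · intro h
        by_contra hc
        push_neg at hc
        obtain ⟨n, hn⟩ := exists_nat_one_div_lt (show (0:ℝ) < a - t₀ by linarith)
        have h2 := h n
        push_cast at hn h2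
        linarith
      · intro h n
        have h3 : (0:ℝ) < 1/((n:ℝ)+1) := by positivity
        linarith
    have h4 := tendsto_measure_iInter_atTop (μ := ν)
      (s := fun n : ℕ => Set.Iic (t₀ + 1/((n:ℝ)+1)))
      (fun n => measurableSet_Iic.nullMeasurableSet)
      (fun m n hmn => Set.Iic_subset_Iic.mpr (by
        have h5 : (1:ℝ)/((n:ℝ)+1) ≤ 1/((m:ℝ)+1) :=
          one_div_le_one_div_of_le (by positivity) (by exact_mod_cast by linarith)
        linarith))
      ⟨0, measure_ne_top ν _⟩
    rwa [h1] at h4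
  obtain ⟨n, hn⟩ := (htend.eventually_lt_const hst).exists
  set t₁ := t₀ + 1/((n:ℝ)+1) with ht₁def
  have hpos : (0:ℝ) < 1/((n:ℝ)+1) := by positivity
  have ht₀₁ : t₀ < t₁ := by rw [ht₁def]; linarith
  have ht₁pos : (0:ℝ) < t₁ := lt_trans ht₀ ht₀₁
  have hstrictIoo : ∀ x : ℝ, t₀ < x → x ≤ t₁ → ν (Set.Ioo 0 x) < μ (Set.Ioo 0 x) := by
    intro x hx1 hx2
    calc ν (Set.Ioo 0 x) ≤ ν (Set.Iic t₁) :=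
          measure_mono (fun a ha => le_trans (le_of_lt ha.2) hx2)
      _ < μ (Set.Iic t₀) := hn
      _ ≤ μ (Set.Iic 0) + μ (Set.Ioc 0 t₀) := by
          rw [← measure_union (Set.Iic_disjoint_Ioc le_rfl) measurableSet_Ioc]
          exact measure_mono (by rw [Set.Iic_union_Ioc_eq_Iic (le_of_lt ht₀)])
      _ = μ (Set.Ioc 0 t₀) := by rw [hμ0, zero_add]
      _ ≤ μ (Set.Ioo 0 x) := measure_mono (Set.Ioc_subset_Ioo_right hx1)
  have hgmeas : Measurable (fun s : ℝ => μ {a : ℝ | s < 1 / a}) :=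
    Antitone.measurable (fun s s' hss' => measure_mono (fun a ha => lt_of_le_of_lt hss' ha))
  refine lintegral_strict_mono_of_ae_le_of_ae_lt_on
    (hgmeas.aemeasurable.restrict) (ne_of_lt ?_) ?_
    (s := Set.Ico (1/t₁) (1/t₀)) ?_ ?_
  · refine lt_of_le_of_lt (lintegral_mono_ae ?_) hfin
    rw [ae_restrict_iff' measurableSet_Ioi]
    refine Filter.Eventually.of_forall fun s hs => ?_
    have hs' : (0:ℝ) < s := hs
    rw [meas_lt_set s hs']
    exact key (1/s) (by positivity)
  · rw [Filter.EventuallyLE, ae_restrict_iff' measurableSet_Ioi]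
    refine Filter.Eventually.of_forall fun s hs => ?_
    have hs' : (0:ℝ) < s := hs
    rw [meas_lt_set s hs']
    exact key (1/s) (by positivity)
  · rw [Measure.restrict_apply' measurableSet_Ioi]
    have hsub : Set.Ico (1/t₁) (1/t₀) ∩ Set.Ioi 0 = Set.Ico (1/t₁) (1/t₀) := by
      apply Set.inter_eq_self_of_subset_left
      intro a ha
      exact lt_of_lt_of_le (one_div_pos.mpr ht₁pos) ha.1
    rw [hsub, Real.volume_Ico]
    have h6 : (1:ℝ)/t₁ < 1/t₀ := one_div_lt_one_div_of_lt ht₀ ht₀₁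
    exact (ENNReal.ofReal_pos.mpr (by linarith)).ne'
  · rw [ae_restrict_iff' measurableSet_Ioi]
    refine Filter.Eventually.of_forall fun s hs hmem => ?_
    have hs' : (0:ℝ) < s := hs
    rw [meas_lt_set s hs']
    refine hstrictIoo (1/s) ?_ ?_
    · rw [lt_div_iff₀ hs']
      have h7 := hmem.2
      rw [lt_div_iff₀ ht₀] at h7
      nlinarith
    · have h8 := hmem.1
      rw [div_le_iff₀ ht₁pos] at h8
      rw [div_le_iff₀ hs']
      nlinarith
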